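/- Let X and Z be real topological vector spaces, C ⊆ Z a convex cone with 0 ∈ C and int C ≠ ∅, e ∈ int C, ε ≥ 0 a real number, S ⊆ X a nonempty set, and F : X → Z a function that is C-continuous at every point of S. Then wEff_{εe}(F,S) = {x̄ ∈ S | ∀ x ∈ S, F(x) ∉ F(x̄) − ε•e − int C} is closed relative to S: every point of closure(wEff_{εe}(F,S)) ∩ S belongs to wEff_{εe}(F,S). -/

import Mathlib

open Set Pointwise

/-- if `F` is `C`-continuous at every point of `S`, then the set
`wEff_{εe}(F,S)` of `ε·e`-weakly efficient solutions is closed relative to `S`. -/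
theorem stmt19 {X Z : Type*}
    [AddCommGroup X] [Module ℝ X] [TopologicalSpace X]
    [IsTopologicalAddGroup X] [ContinuousSMul ℝ X]
    [AddCommGroup Z] [Module ℝ Z] [TopologicalSpace Z]
    [IsTopologicalAddGroup Z] [ContinuousSMul ℝ Z]
    (C : Set Z) (hCadd : ∀ c₁ ∈ C, ∀ c₂ ∈ C, c₁ + c₂ ∈ C)
    (hCsmul : ∀ t : ℝ, 0 ≤ t → ∀ c ∈ C, t • c ∈ C)
    (hC0 : (0 : Z) ∈ C) (hCint : (interior C).Nonempty)
    (e : Z) (he : e ∈ interior C) (ε : ℝ) (hε : 0 ≤ ε)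
    (S : Set X) (hS : S.Nonempty) (F : X → Z)
    (hF : ∀ xbar ∈ S, ∀ W ∈ nhds (0 : Z), ∃ U ∈ nhds (0 : X),
      ∀ x ∈ S, x - xbar ∈ U → F x ∈ {F xbar} + W + C) :
    closure {xbar ∈ S | ∀ x ∈ S, F xbar - ε • e - F x ∉ interior C} ∩ S ⊆
      {xbar ∈ S | ∀ x ∈ S, F xbar - ε • e - F x ∉ interior C} := by
  -- interior C + C ⊆ interior C
  have hintC : ∀ a ∈ interior C, ∀ c ∈ C, a + c ∈ interior C := by
    intro a ha c hc
    have hopen : IsOpen ((fun z => z + c) '' interior C) :=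
      (isOpenMap_add_right c) _ isOpen_interior
    have hsub : (fun z => z + c) '' interior C ⊆ C := by
      rintro _ ⟨b, hb, rfl⟩
      exact hCadd b (interior_subset hb) c hc
    exact interior_maximal hsub hopen ⟨a, ha, rfl⟩
  rintro xbar ⟨hcl, hxS⟩
  refine ⟨hxS, fun x hx hcon => ?_⟩
  set W : Set Z := {w | F xbar - ε • e - F x + w ∈ interior C} with hWdef
  have hWnhds : W ∈ nhds (0 : Z) := by
    have hc : Continuous fun w : Z => F xbar - ε • e - F x + w := by continuity
    have : Filter.Tendsto (fun w : Z => F xbar - ε • e - F x + w) (nhds 0)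
        (nhds (F xbar - ε • e - F x)) := by
      simpa using hc.tendsto 0
    exact this (isOpen_interior.mem_nhds hcon)
  obtain ⟨U, hU, hUprop⟩ := hF xbar hxS W hWnhds
  have hVnhds : {y : X | y - xbar ∈ U} ∈ nhds xbar := by
    have hc : Continuous fun y : X => y - xbar := by continuity
    have : Filter.Tendsto (fun y : X => y - xbar) (nhds xbar) (nhds 0) := by
      simpa using hc.tendsto xbar
    exact this hU
  obtain ⟨y, hyV, hyA⟩ := mem_closure_iff_nhds.mp hcl _ hVnhds
  obtain ⟨hyS, hyEff⟩ := hyA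
  have hFy := hUprop y hyS hyV
  obtain ⟨_, ⟨fx, hfx, w, hw, rfl⟩, c, hc, heq⟩ := hFy
  rw [mem_singleton_iff] at hfx
  subst hfx
  apply hyEff x hx
  have h2 : F y - ε • e - F x = (F xbar - ε • e - F x + w) + c := by
    rw [← heq]; beta_reduce; abel
  rw [h2]
  exact hintC _ hw c hc
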